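/- Let γ be a balanced directed multigraph (every vertex has indegree equal to outdegree), let e be a directed edge with initial vertex v. Then the number of Eulerian tours of γ starting with the edge e equals σ(γ, v) · ∏_{u} (outdeg(u) − 1)!, where σ(γ, v) is the number of oriented spanning trees of γ rooted at v (all tree edges directed toward v) and the product runs over all vertices u. -/

import Mathlib

section BEST

variable {V E : Type} [Fintype V] [DecidableEq V] [Fintype E] [DecidableEq E]

/-- `l` is an Eulerian tour of the directed multigraph with edge set `E`
(edge `e` running from `src e` to `tgt e`) starting with the edge `e₀`:
it lists every edge exactly once, begins with `e₀`, consecutive edges are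
head-to-tail, and the tour closes up. -/
def IsEulerianTourFrom (src tgt : E → V) (e₀ : E) (l : List E) : Prop :=
  l.Nodup ∧ (∀ f : E, f ∈ l) ∧ l.head? = some e₀ ∧
  (∀ i, (h : i + 1 < l.length) →
    tgt (l.get ⟨i, Nat.lt_of_succ_lt h⟩) = src (l.get ⟨i + 1, h⟩)) ∧
  (∀ h : l ≠ [], tgt (l.getLast h) = src e₀)

/-- `t` is an oriented spanning tree (arborescence) rooted at `v`: it selects
for each vertex `u ≠ v` an edge leaving `u`, and following the selected edges
from any vertex eventually reaches the root `v`. -/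
def IsArborescence (src tgt : E → V) (v : V) (t : ∀ u : V, u ≠ v → E) : Prop :=
  (∀ u h, src (t u h) = u) ∧
  (∀ u : V, ∃ n : ℕ,
    (fun w => if h : w = v then v else tgt (t w h))^[n] u = v)


namespace BESTAux

set_option linter.unusedSectionVars false
set_option linter.unusedVariables false

variable {V E : Type} [Fintype V] [DecidableEq V] [Fintype E] [DecidableEq E]


lemma finite_listSub (P : List E → Prop) (h : ∀ l, P l → l.Nodup) : Finite {l : List E // P l} := by
  have hinj : Function.Injective
      (fun x : {l : List E // P l} => (⟨x.1, h x.1 x.2⟩ : {l : List E // l.Nodup})) := by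
    intro a b hab
    have : (⟨a.1, h a.1 a.2⟩ : {l : List E // l.Nodup}).1 = (⟨b.1, h b.1 b.2⟩ : {l : List E // l.Nodup}).1 := congrArg Subtype.val hab
    exact Subtype.ext this
  exact Finite.of_injective _ hinj

lemma nat_card_sigma {ι : Type} [Fintype ι] (f : ι → Type) [∀ i, Finite (f i)] :
    Nat.card (Σ i, f i) = ∑ i, Nat.card (f i) := by
  letI : ∀ i, Fintype (f i) := fun i => Fintype.ofFinite _
  simp [Nat.card_eq_fintype_card]

lemma card_listings : ∀ (n : ℕ) (s : Finset E), s.card = n →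
    Nat.card {l : List E // l.Nodup ∧ ∀ e, e ∈ l ↔ e ∈ s} = n.factorial := by
  intro n
  induction n with
  | zero =>
    intro s hs
    have hs0 : s = ∅ := Finset.card_eq_zero.mp hs
    subst hs0
    haveI : Unique {l : List E // l.Nodup ∧ ∀ e, e ∈ l ↔ e ∈ (∅ : Finset E)} := by
      refine ⟨⟨⟨[], by simp⟩⟩, ?_⟩
      rintro ⟨l, hnd, hm⟩
      refine Subtype.ext ?_
      simp only
      rw [List.eq_nil_iff_forall_not_mem]
      intro a ha
      simpa using (hm a).1 ha
    rw [Nat.factorial_zero]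
    exact Nat.card_unique
  | succ n ih =>
    intro s hs
    have hne : s.Nonempty := by
      rw [← Finset.card_pos, hs]; omega
    obtain ⟨x0, hx0⟩ := hne
    haveI : ∀ x : {x : E // x ∈ s}, Finite {m : List E // m.Nodup ∧ ∀ e, e ∈ m ↔ e ∈ s.erase x.1} :=
      fun x => finite_listSub _ (fun l h => h.1)
    have hlne : ∀ (l : List E), (∀ e, e ∈ l ↔ e ∈ s) → l ≠ [] := by
      intro l hm h
      subst h
      exact absurd ((hm x0).2 hx0) List.not_mem_nil
    have e1 : {l : List E // l.Nodup ∧ ∀ e, e ∈ l ↔ e ∈ s} ≃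
        Σ x : {x : E // x ∈ s}, {m : List E // m.Nodup ∧ ∀ e, e ∈ m ↔ e ∈ s.erase x.1} := by
      refine ⟨fun l => ⟨⟨l.1.head (hlne l.1 l.2.2), (l.2.2 _).1 (List.head_mem _)⟩,
          ⟨l.1.tail, ?_⟩⟩, fun y => ⟨y.1.1 :: y.2.1, ?_, ?_⟩, ?_, ?_⟩
      · obtain ⟨l, hnd, hm⟩ := l
        have hne' := hlne l hm
        cases l with
        | nil => exact absurd rfl hne'
        | cons a t =>
          simp only [List.nodup_cons] at hnd
          refine ⟨hnd.2, fun e => ?_⟩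
          simp only [List.head_cons, List.tail_cons, Finset.mem_erase]
          constructor
          · intro he
            exact ⟨fun h => hnd.1 (h ▸ he), (hm e).1 (List.mem_cons_of_mem _ he)⟩
          · rintro ⟨hne2, hes⟩
            rcases List.mem_cons.mp ((hm e).2 hes) with h | h
            · exact absurd h hne2
            · exact h
      · rw [List.nodup_cons]
        refine ⟨fun h => ?_, y.2.2.1⟩
        exact absurd ((y.2.2.2 _).1 h) (fun hc => (Finset.mem_erase.mp hc).1 rfl)
      · intro e
        rw [List.mem_cons]
        constructor
        · rintro (rfl | h)
          · exact y.1.2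
          · exact Finset.mem_of_mem_erase ((y.2.2.2 e).1 h)
        · intro hes
          by_cases hxe : e = y.1.1
          · exact Or.inl hxe
          · exact Or.inr ((y.2.2.2 e).2 (Finset.mem_erase.mpr ⟨hxe, hes⟩))
      · intro l
        exact Subtype.ext (List.cons_head_tail _)
      · rintro ⟨⟨x, hx⟩, ⟨m, hm⟩⟩
        rfl
    rw [Nat.card_congr e1, nat_card_sigma]
    have hcard : ∀ x : {x : E // x ∈ s},
        Nat.card {m : List E // m.Nodup ∧ ∀ e, e ∈ m ↔ e ∈ s.erase x.1} = n.factorial := by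
      intro x
      exact ih _ (by rw [Finset.card_erase_of_mem x.2, hs]; omega)
    simp only [hcard, Finset.sum_const, Finset.card_univ, Fintype.card_coe, hs, smul_eq_mul]
    rw [Nat.factorial_succ]

lemma card_listings_head (s : Finset E) (x : E) (hx : x ∈ s) :
    Nat.card {l : List E // l.Nodup ∧ (∀ e, e ∈ l ↔ e ∈ s) ∧ l.head? = some x} =
      (s.card - 1).factorial := by
  have e1 : {l : List E // l.Nodup ∧ (∀ e, e ∈ l ↔ e ∈ s) ∧ l.head? = some x} ≃
      {m : List E // m.Nodup ∧ ∀ e, e ∈ m ↔ e ∈ s.erase x} := by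
    refine ⟨fun l => ⟨l.1.tail, ?_⟩, fun m => ⟨x :: m.1, ?_, ?_, rfl⟩, ?_, ?_⟩
    · obtain ⟨l, hnd, hm, hh⟩ := l
      cases l with
      | nil => simp at hh
      | cons a t =>
        simp only [List.head?_cons, Option.some_inj] at hh
        subst hh
        simp only [List.nodup_cons] at hnd
        refine ⟨hnd.2, fun e => ?_⟩
        simp only [List.tail_cons, Finset.mem_erase]
        constructor
        · intro he
          exact ⟨fun h => hnd.1 (h ▸ he), (hm e).1 (List.mem_cons_of_mem _ he)⟩
        · rintro ⟨hne2, hes⟩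
          rcases List.mem_cons.mp ((hm e).2 hes) with h | h
          · exact absurd h hne2
          · exact h
    · rw [List.nodup_cons]
      exact ⟨fun h => absurd ((m.2.2 _).1 h) (fun hc => (Finset.mem_erase.mp hc).1 rfl), m.2.1⟩
    · intro e
      rw [List.mem_cons]
      constructor
      · rintro (rfl | h)
        · exact hx
        · exact Finset.mem_of_mem_erase ((m.2.2 e).1 h)
      · intro hes
        by_cases hxe : e = x
        · exact Or.inl hxe
        · exact Or.inr ((m.2.2 e).2 (Finset.mem_erase.mpr ⟨hxe, hes⟩))
    · rintro ⟨l, hnd, hm, hh⟩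
      refine Subtype.ext ?_
      cases l with
      | nil => simp at hh
      | cons a t =>
        simp only [List.head?_cons, Option.some_inj] at hh
        subst hh
        rfl
    · intro m
      exact Subtype.ext rfl
  rw [Nat.card_congr e1]
  exact card_listings _ _ (Finset.card_erase_of_mem hx)

lemma card_listings_last (s : Finset E) (x : E) (hx : x ∈ s) :
    Nat.card {l : List E // l.Nodup ∧ (∀ e, e ∈ l ↔ e ∈ s) ∧ l.getLast? = some x} =
      (s.card - 1).factorial := by
  have e1 : {l : List E // l.Nodup ∧ (∀ e, e ∈ l ↔ e ∈ s) ∧ l.getLast? = some x} ≃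
      {l : List E // l.Nodup ∧ (∀ e, e ∈ l ↔ e ∈ s) ∧ l.head? = some x} := by
    refine ⟨fun l => ⟨l.1.reverse, ?_, ?_, ?_⟩, fun l => ⟨l.1.reverse, ?_, ?_, ?_⟩, ?_, ?_⟩
    · rw [List.nodup_reverse]; exact l.2.1
    · intro e; rw [List.mem_reverse]; exact l.2.2.1 e
    · rw [List.head?_reverse]; exact l.2.2.2
    · rw [List.nodup_reverse]; exact l.2.1
    · intro e; rw [List.mem_reverse]; exact l.2.2.1 e
    · rw [← List.head?_reverse, List.reverse_reverse]; exact l.2.2.2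
    · intro l; exact Subtype.ext (List.reverse_reverse _)
    · intro l; exact Subtype.ext (List.reverse_reverse _)
  rw [Nat.card_congr e1]
  exact card_listings_head s x hx


/-- Number of edges in `l` whose `g`-endpoint is `u`. -/
def cntO (g : E → V) (l : List E) (u : V) : ℕ := (l.filter (fun f => decide (g f = u))).length

/-- Family of per-vertex orderings of outgoing edges. -/
def OutData (src : E → V) (D : V → List E) : Prop :=
  ∀ u, (D u).Nodup ∧ ∀ e, e ∈ D u ↔ src e = u

/-- One step of the greedy walk. -/
def stepW (src tgt : E → V) (D : V → List E) (l : List E) : List E :=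
  match l.getLast? with
  | none => l
  | some e =>
    match (D (tgt e))[cntO src l (tgt e)]? with
    | none => l
    | some f => l ++ [f]

/-- The greedy walk after `n` steps. -/
def walkW (src tgt : E → V) (D : V → List E) (e₀ : E) (n : ℕ) : List E :=
  (stepW src tgt D)^[n] [e₀]

lemma stepW_of_none (src tgt : E → V) (D : V → List E) (l : List E) (e : E)
    (he : l.getLast? = some e) (h : (D (tgt e))[cntO src l (tgt e)]? = none) :
    stepW src tgt D l = l := by
  simp only [stepW, he, h]

lemma stepW_of_some (src tgt : E → V) (D : V → List E) (l : List E) (e f : E)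
    (he : l.getLast? = some e) (h : (D (tgt e))[cntO src l (tgt e)]? = some f) :
    stepW src tgt D l = l ++ [f] := by
  simp only [stepW, he, h]

lemma cntO_append_singleton (g : E → V) (l : List E) (f : E) (u : V) :
    cntO g (l ++ [f]) u = cntO g l u + if g f = u then 1 else 0 := by
  unfold cntO
  rw [List.filter_append]
  by_cases h : g f = u
  · simp [h]
  · simp [h]

/-- The invariant maintained along the greedy walk. -/
structure InvW (src tgt : E → V) (D : V → List E) (e₀ : E) (l : List E) : Prop where
  ne : l ≠ []
  hd : l.head? = some e₀
  chain : l.Chain' (fun a b => tgt a = src b)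
  pref : ∀ u, l.filter (fun f => decide (src f = u)) <+: D u
  bal : ∀ w, cntO tgt l w + (if w = src e₀ then 1 else 0)
      = cntO src l w + (if w = tgt (l.getLast?.getD e₀) then 1 else 0)

lemma invW_init (src tgt : E → V) (D : V → List E) (e₀ : E)
    (hhd : (D (src e₀)).head? = some e₀) : InvW src tgt D e₀ [e₀] := by
  obtain ⟨t0, ht0⟩ : ∃ t0, D (src e₀) = e₀ :: t0 := by
    cases hD : D (src e₀) with
    | nil => rw [hD] at hhd; simp at hhd
    | cons a t => rw [hD] at hhd; simp at hhd; exact ⟨t, by rw [hhd]⟩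
  refine ⟨by simp, rfl, List.isChain_singleton e₀, ?_, ?_⟩
  · intro u
    by_cases h : src e₀ = u
    · subst h
      rw [ht0]
      exact ⟨t0, by simp⟩
    · simp only [List.filter, h]
      simp [h]
  · intro w
    have hc : ∀ (g : E → V), cntO g [e₀] w = if g e₀ = w then 1 else 0 := by
      intro g
      by_cases h : g e₀ = w <;> simp [cntO, List.filter, h]
    simp only [List.getLast?_singleton, Option.getD_some, hc]
    by_cases h1 : w = tgt e₀ <;> by_cases h2 : w = src e₀ <;>
      simp [h1, h2, Ne.symm, eq_comm] <;> omega

lemma nodup_of_pref (src : E → V) (D : V → List E) (hD : OutData src D) (l : List E)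
    (hp : ∀ u, l.filter (fun f => decide (src f = u)) <+: D u) : l.Nodup := by
  rw [List.nodup_iff_count_le_one]
  intro a
  have h1 : (l.filter (fun f => decide (src f = src a))).count a = l.count a := by
    simp [List.count_filter]
  have h2 : (l.filter (fun f => decide (src f = src a))).count a ≤ (D (src a)).count a :=
    ((hp (src a)).sublist).count_le a
  have h3 : (D (src a)).count a ≤ 1 := List.nodup_iff_count_le_one.mp (hD (src a)).1 a
  omega


lemma head?_append_left {α : Type*} (l l' : List α) (h : l ≠ []) :
    (l ++ l').head? = l.head? := by
  cases l with
  | nil => exact absurd rfl h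
  | cons a t => simp

lemma invW_step (src tgt : E → V) (D : V → List E) (e₀ : E) (hD : OutData src D)
    (l : List E) (hl : InvW src tgt D e₀ l) :
    InvW src tgt D e₀ (stepW src tgt D l) := by
  obtain ⟨e, he⟩ : ∃ e, l.getLast? = some e :=
    ⟨l.getLast hl.ne, List.getLast?_eq_getLast hl.ne⟩
  cases hget : (D (tgt e))[cntO src l (tgt e)]? with
  | none => rw [stepW_of_none src tgt D l e he hget]; exact hl
  | some f =>
    rw [stepW_of_some src tgt D l e f he hget]
    have hfD : f ∈ D (tgt e) := List.mem_of_getElem? hget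
    have hsf : src f = tgt e := ((hD (tgt e)).2 f).1 hfD
    refine ⟨by simp, ?_, ?_, ?_, ?_⟩
    · rw [head?_append_left _ _ hl.ne]; exact hl.hd
    · show List.IsChain _ _
      rw [List.isChain_append]
      refine ⟨hl.chain, List.isChain_singleton f, ?_⟩
      intro x hx y hy
      rw [he] at hx
      simp only [Option.mem_def, Option.some_inj] at hx
      simp only [List.head?_cons, Option.mem_def, Option.some_inj] at hy
      subst hx; subst hy
      exact hsf.symm
    · intro u
      rw [List.filter_append]
      by_cases hu : u = tgt e
      · subst hu
        have hfil : l.filter (fun g => decide (src g = tgt e))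
            = (D (tgt e)).take (cntO src l (tgt e)) := by
          have h := hl.pref (tgt e)
          rw [List.prefix_iff_eq_take] at h
          exact h
        have hfil2 : List.filter (fun g => decide (src g = tgt e)) [f] = [f] := by
          simp [hsf]
        rw [hfil, hfil2]
        have : (D (tgt e)).take (cntO src l (tgt e)) ++ [f]
            = (D (tgt e)).take (cntO src l (tgt e) + 1) := by
          rw [List.take_succ, hget]
          rfl
        rw [this]
        exact List.take_prefix _ _
      · have hfil2 : List.filter (fun g => decide (src g = u)) [f] = [] := by
          have : ¬ (src f = u) := by

            rw [hsf]
            exact fun h => hu h.symm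
          simp [this]
        rw [hfil2, List.append_nil]
        exact hl.pref u
    · intro w'
      rw [List.getLast?_concat, cntO_append_singleton, cntO_append_singleton]
      have hb := hl.bal w'
      rw [he] at hb
      simp only [Option.getD_some] at hb ⊢
      have e1 : (if tgt f = w' then 1 else 0) = (if w' = tgt f then 1 else 0) := by
        simp [eq_comm]
      have e2 : (if src f = w' then 1 else 0) = (if w' = src f then 1 else 0) := by
        simp [eq_comm]
      have e3 : (if w' = tgt e then (1:ℕ) else 0) = (if w' = src f then 1 else 0) := by
        rw [hsf]
      rw [e1, e2]
      rw [e3] at hb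
      by_cases hA : w' = tgt f <;> by_cases hB : w' = src f <;> by_cases hC : w' = src e₀ <;>
        simp only [hA, hB, hC, if_pos, if_neg, if_true, if_false] <;>
        simp [hA, hB, hC] at hb ⊢ <;> omega


lemma walkW_succ (src tgt : E → V) (D : V → List E) (e₀ : E) (n : ℕ) :
    walkW src tgt D e₀ (n + 1) = stepW src tgt D (walkW src tgt D e₀ n) :=
  Function.iterate_succ_apply' _ _ _

lemma invW_walk (src tgt : E → V) (D : V → List E) (e₀ : E) (hD : OutData src D)
    (hhd : (D (src e₀)).head? = some e₀) (n : ℕ) :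
    InvW src tgt D e₀ (walkW src tgt D e₀ n) := by
  induction n with
  | zero => exact invW_init src tgt D e₀ hhd
  | succ n ih =>
    rw [walkW_succ]
    exact invW_step src tgt D e₀ hD _ ih

lemma lengthD (src : E → V) (D : V → List E) (hD : OutData src D) (u : V) :
    (D u).length = (Finset.univ.filter fun e => src e = u).card := by
  have h1 : (D u).toFinset = Finset.univ.filter (fun e => src e = u) := by
    ext a
    simp [List.mem_toFinset, (hD u).2 a]
  rw [← List.toFinset_card_of_nodup (hD u).1, h1]

lemma cnt_le (g : E → V) (l : List E) (hnd : l.Nodup) (w : V) :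
    cntO g l w ≤ (Finset.univ.filter fun e => g e = w).card := by
  have hnd2 : (l.filter (fun f => decide (g f = w))).Nodup := hnd.filter _
  rw [cntO, ← List.toFinset_card_of_nodup hnd2]
  apply Finset.card_le_card
  intro a ha
  simp only [List.mem_toFinset, List.mem_filter, decide_eq_true_eq] at ha
  simp only [Finset.mem_filter, Finset.mem_univ, true_and]
  exact ha.2

lemma cnt_lt (g : E → V) (l : List E) (hnd : l.Nodup) (w : V) (f : E)
    (hf : g f = w) (hfl : f ∉ l) :
    cntO g l w < (Finset.univ.filter fun e => g e = w).card := by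
  have hnd2 : (l.filter (fun f => decide (g f = w))).Nodup := hnd.filter _
  rw [cntO, ← List.toFinset_card_of_nodup hnd2]
  apply Finset.card_lt_card
  constructor
  · intro a ha
    simp only [List.mem_toFinset, List.mem_filter, decide_eq_true_eq] at ha
    simp only [Finset.mem_filter, Finset.mem_univ, true_and]
    exact ha.2
  · intro hsub
    have : f ∈ (l.filter (fun f => decide (g f = w))).toFinset := by
      apply hsub
      simp [hf]
    simp only [List.mem_toFinset] at this
    exact hfl (List.mem_of_mem_filter this)

lemma stuck_props (src tgt : E → V) (D : V → List E) (e₀ : E)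
    (hbal : ∀ v : V, (Finset.univ.filter fun e => tgt e = v).card =
      (Finset.univ.filter fun e => src e = v).card)
    (hD : OutData src D) (l : List E) (hl : InvW src tgt D e₀ l)
    (hstuck : stepW src tgt D l = l) :
    tgt (l.getLast?.getD e₀) = src e₀ ∧ (∀ w, cntO tgt l w = cntO src l w) ∧
      cntO src l (tgt (l.getLast?.getD e₀)) = (D (tgt (l.getLast?.getD e₀))).length := by
  obtain ⟨e, he⟩ : ∃ e, l.getLast? = some e :=
    ⟨l.getLast hl.ne, List.getLast?_eq_getLast hl.ne⟩
  rw [he]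
  simp only [Option.getD_some]
  have hnone : (D (tgt e))[cntO src l (tgt e)]? = none := by
    cases hget : (D (tgt e))[cntO src l (tgt e)]? with
    | none => rfl
    | some f =>
      exfalso
      have := stepW_of_some src tgt D l e f he hget
      rw [hstuck] at this
      have := congrArg List.length this
      simp at this
  have hfull : cntO src l (tgt e) = (D (tgt e)).length := by
    have h1 : (D (tgt e)).length ≤ cntO src l (tgt e) := by
      rw [List.getElem?_eq_none_iff] at hnone
      exact hnone
    have h2 : cntO src l (tgt e) ≤ (D (tgt e)).length :=
      (hl.pref (tgt e)).length_le
    omega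
  have hcur : tgt e = src e₀ := by
    by_contra hc
    have hb := hl.bal (tgt e)
    rw [he] at hb
    simp only [Option.getD_some] at hb
    rw [if_neg hc] at hb
    simp only [if_true] at hb
    have h3 : cntO tgt l (tgt e) ≤ (Finset.univ.filter fun f => tgt f = tgt e).card :=
      cnt_le tgt l (nodup_of_pref src D hD l hl.pref) (tgt e)
    rw [hbal (tgt e), ← lengthD src D hD] at h3
    omega
  refine ⟨hcur, ?_, hfull⟩
  intro w
  have hb := hl.bal w
  rw [he] at hb
  simp only [Option.getD_some, hcur] at hb
  by_cases hw : w = src e₀ <;> omega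

lemma stepW_cases (src tgt : E → V) (D : V → List E) (l : List E) :
    stepW src tgt D l = l ∨ ∃ f, stepW src tgt D l = l ++ [f] := by
  cases he : l.getLast? with
  | none => left; simp only [stepW, he]
  | some e =>
    cases hget : (D (tgt e))[cntO src l (tgt e)]? with
    | none => left; exact stepW_of_none src tgt D l e he hget
    | some f => right; exact ⟨f, stepW_of_some src tgt D l e f he hget⟩

lemma walk_final_stuck (src tgt : E → V) (D : V → List E) (e₀ : E) (hD : OutData src D)
    (hhd : (D (src e₀)).head? = some e₀) :
    stepW src tgt D (walkW src tgt D e₀ (Fintype.card E)) = walkW src tgt D e₀ (Fintype.card E) := by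
  by_cases h : ∃ m, m ≤ Fintype.card E ∧ stepW src tgt D (walkW src tgt D e₀ m) = walkW src tgt D e₀ m
  · obtain ⟨m, hm, hstuck⟩ := h
    have hconst : ∀ k, walkW src tgt D e₀ (m + k) = walkW src tgt D e₀ m := by
      intro k
      induction k with
      | zero => rfl
      | succ k ih =>
        have : m + (k+1) = (m + k) + 1 := rfl
        rw [this, walkW_succ, ih, hstuck]
    have hNm : walkW src tgt D e₀ (Fintype.card E) = walkW src tgt D e₀ m := by
      have := hconst (Fintype.card E - m)
      rwa [Nat.add_sub_cancel' hm] at this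
    rw [hNm]
    exact hstuck
  · exfalso
    push_neg at h
    have grow : ∀ m, m ≤ Fintype.card E → m + 1 ≤ (walkW src tgt D e₀ m).length := by
      intro m
      induction m with
      | zero => intro _; simp [walkW]
      | succ m ih =>
        intro hm
        have h1 := h m (by omega)
        rcases stepW_cases src tgt D (walkW src tgt D e₀ m) with h2 | ⟨f, h2⟩
        · exact absurd h2 h1
        · rw [walkW_succ, h2]
          have := ih (by omega)
          simp only [List.length_append, List.length_cons, List.length_nil]
          omega
    have h1 := grow (Fintype.card E) le_rfl
    have hnd : (walkW src tgt D e₀ (Fintype.card E)).Nodup :=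
      nodup_of_pref src D hD _ (invW_walk src tgt D e₀ hD hhd (Fintype.card E)).pref
    have h2 := hnd.length_le_card
    omega

lemma walk_complete (src tgt : E → V) (D : V → List E) (e₀ : E)
    (hbal : ∀ v : V, (Finset.univ.filter fun e => tgt e = v).card =
      (Finset.univ.filter fun e => src e = v).card)
    (hD : OutData src D) (hhd : (D (src e₀)).head? = some e₀)
    (harb : ∀ u : V, ∃ n : ℕ,
      (fun w => if h : w = src e₀ then src e₀
        else tgt (((D w).getLast?).getD e₀))^[n] u = src e₀)
    (hsrc : ∀ u : V, ∀ (h : u ≠ src e₀), src (((D u).getLast?).getD e₀) = u) :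
    ∀ u, cntO src (walkW src tgt D e₀ (Fintype.card E)) u =
      (Finset.univ.filter fun e => src e = u).card := by
  set l := walkW src tgt D e₀ (Fintype.card E) with hldef
  have hl : InvW src tgt D e₀ l := invW_walk src tgt D e₀ hD hhd _
  have hnd : l.Nodup := nodup_of_pref src D hD l hl.pref
  have hstuck : stepW src tgt D l = l := walk_final_stuck src tgt D e₀ hD hhd
  obtain ⟨hcur, hcnt, hvfull⟩ := stuck_props src tgt D e₀ hbal hD l hl hstuck
  rw [hcur] at hvfull
  have key : ∀ n u, (fun w => if h : w = src e₀ then src e₀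
      else tgt (((D w).getLast?).getD e₀))^[n] u = src e₀ →
      cntO src l u = (Finset.univ.filter fun e => src e = u).card := by
    intro n
    induction n with
    | zero =>
      intro u hu
      simp only [Function.iterate_zero, id] at hu
      subst hu
      rw [hvfull, lengthD src D hD]
    | succ n ih =>
      intro u hu
      by_cases huv : u = src e₀
      · subst huv
        rw [hvfull, lengthD src D hD]
      · have hle : cntO src l u ≤ (D u).length := (hl.pref u).length_le
        by_contra hne
        have hlt : cntO src l u < (D u).length := by
          rw [lengthD src D hD u]
          have h2 := cnt_le src l hnd u
          omega
        have hDne : D u ≠ [] := by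
          intro hnil
          rw [hnil] at hlt
          simp at hlt
        have hgl : (D u).getLast? = some ((D u).getLast hDne) :=
          List.getLast?_eq_getLast hDne
        set tu : E := ((D u).getLast?).getD e₀ with htu
        have htu2 : tu = (D u).getLast hDne := by rw [htu, hgl, Option.getD_some]
        have hsrctu : src tu = u := hsrc u huv
        have hnotin : tu ∉ l := by
          intro hin
          have hmem : tu ∈ l.filter (fun f => decide (src f = u)) := by
            rw [List.mem_filter]
            exact ⟨hin, by simp [hsrctu]⟩
          have hfil : l.filter (fun f => decide (src f = u))
              = (D u).take (cntO src l u) := by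
            have h := hl.pref u
            rw [List.prefix_iff_eq_take] at h
            exact h
          rw [hfil] at hmem
          have hdisj : List.Disjoint ((D u).take (cntO src l u)) ((D u).drop (cntO src l u)) := by
            have hnd2 := (hD u).1
            rw [← List.take_append_drop (cntO src l u) (D u), List.nodup_append] at hnd2
            exact fun a ha hb => hnd2.2.2 a ha a hb rfl
          have hmemdrop : tu ∈ (D u).drop (cntO src l u) := by
            have hlen : cntO src l u + ((D u).length - 1 - cntO src l u) = (D u).length - 1 := by
              omega
            have hgetd : ((D u).drop (cntO src l u))[(D u).length - 1 - cntO src l u]'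
                (by rw [List.length_drop]; omega) = (D u)[(D u).length - 1]'(by omega) := by
              rw [List.getElem_drop]
              congr 1
            have : (D u)[(D u).length - 1]'(by omega) = (D u).getLast hDne :=
              (List.getLast_eq_getElem hDne).symm
            rw [this, ← htu2] at hgetd
            rw [← hgetd]
            exact List.getElem_mem _
          exact hdisj hmem hmemdrop
        have hlt2 : cntO tgt l (tgt tu) < (Finset.univ.filter fun e => tgt e = tgt tu).card :=
          cnt_lt tgt l hnd (tgt tu) tu rfl hnotin
        have hn' : (fun w => if h : w = src e₀ then src e₀
            else tgt (((D w).getLast?).getD e₀))^[n] (tgt tu) = src e₀ := by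
          rw [Function.iterate_succ_apply] at hu
          simp only [dif_neg huv] at hu
          exact hu
        have hihw := ih (tgt tu) hn'
        rw [← hcnt (tgt tu)] at hihw
        rw [hbal (tgt tu)] at hlt2
        omega
  intro u
  obtain ⟨n, hn⟩ := harb u
  exact key n u hn

lemma filters_final (src tgt : E → V) (D : V → List E) (e₀ : E)
    (hbal : ∀ v : V, (Finset.univ.filter fun e => tgt e = v).card =
      (Finset.univ.filter fun e => src e = v).card)
    (hD : OutData src D) (hhd : (D (src e₀)).head? = some e₀)
    (harb : ∀ u : V, ∃ n : ℕ,
      (fun w => if h : w = src e₀ then src e₀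
        else tgt (((D w).getLast?).getD e₀))^[n] u = src e₀)
    (hsrc : ∀ u : V, ∀ (h : u ≠ src e₀), src (((D u).getLast?).getD e₀) = u) :
    ∀ u, (walkW src tgt D e₀ (Fintype.card E)).filter (fun f => decide (src f = u)) = D u := by
  intro u
  have hl : InvW src tgt D e₀ _ := invW_walk src tgt D e₀ hD hhd (Fintype.card E)
  apply (hl.pref u).eq_of_length
  have h1 := walk_complete src tgt D e₀ hbal hD hhd harb hsrc u
  rw [lengthD src D hD u]
  exact h1

lemma mem_final (src tgt : E → V) (D : V → List E) (e₀ : E)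
    (hbal : ∀ v : V, (Finset.univ.filter fun e => tgt e = v).card =
      (Finset.univ.filter fun e => src e = v).card)
    (hD : OutData src D) (hhd : (D (src e₀)).head? = some e₀)
    (harb : ∀ u : V, ∃ n : ℕ,
      (fun w => if h : w = src e₀ then src e₀
        else tgt (((D w).getLast?).getD e₀))^[n] u = src e₀)
    (hsrc : ∀ u : V, ∀ (h : u ≠ src e₀), src (((D u).getLast?).getD e₀) = u) :
    ∀ f, f ∈ walkW src tgt D e₀ (Fintype.card E) := by
  intro f
  have h1 := filters_final src tgt D e₀ hbal hD hhd harb hsrc (src f)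
  have h2 : f ∈ D (src f) := ((hD (src f)).2 f).2 rfl
  rw [← h1] at h2
  exact List.mem_of_mem_filter h2

lemma final_tour (src tgt : E → V) (D : V → List E) (e₀ : E)
    (hbal : ∀ v : V, (Finset.univ.filter fun e => tgt e = v).card =
      (Finset.univ.filter fun e => src e = v).card)
    (hD : OutData src D) (hhd : (D (src e₀)).head? = some e₀)
    (harb : ∀ u : V, ∃ n : ℕ,
      (fun w => if h : w = src e₀ then src e₀
        else tgt (((D w).getLast?).getD e₀))^[n] u = src e₀)
    (hsrc : ∀ u : V, ∀ (h : u ≠ src e₀), src (((D u).getLast?).getD e₀) = u) :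
    IsEulerianTourFrom src tgt e₀ (walkW src tgt D e₀ (Fintype.card E)) := by
  have hl : InvW src tgt D e₀ _ := invW_walk src tgt D e₀ hD hhd (Fintype.card E)
  have hnd := nodup_of_pref src D hD _ hl.pref
  have hstuck := walk_final_stuck src tgt D e₀ hD hhd
  obtain ⟨hcur, -, -⟩ := stuck_props src tgt D e₀ hbal hD _ hl hstuck
  refine ⟨hnd, mem_final src tgt D e₀ hbal hD hhd harb hsrc, hl.hd, ?_, ?_⟩
  · intro i h
    exact List.isChain_iff_getElem.mp hl.chain i (by omega)
  · intro h
    rwa [List.getLast?_eq_getLast h, Option.getD_some] at hcur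

lemma maxIndex (l : List E) (hnd : l.Nodup) (p : E → Bool) (hne : l.filter p ≠ [])
    (j : ℕ) (hj : j < l.length) (hpj : p (l[j]'hj)) :
    j ≤ l.idxOf ((l.filter p).getLast hne) := by
  set x := (l.filter p).getLast hne with hx
  have hxmem : x ∈ l := List.mem_of_mem_filter (List.getLast_mem hne)
  have hi : l.idxOf x < l.length := List.idxOf_lt_length_iff.mpr hxmem
  set i := l.idxOf x with hidef
  have hgeti : l[i]'hi = x := List.getElem_idxOf hi
  by_contra hgt
  push_neg at hgt
  -- show the filter of the drop is nonempty, containing l[j]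
  have hmem1 : l[j]'hj ∈ l.drop (i+1) := by
    have heq : (l.drop (i+1))[j - (i+1)]'(by rw [List.length_drop]; omega) = l[j]'hj := by
      rw [List.getElem_drop]
      congr 1
      omega
    rw [← heq]
    exact List.getElem_mem _
  have hjmem : l[j]'hj ∈ (l.drop (i+1)).filter p := List.mem_filter.mpr ⟨hmem1, hpj⟩
  have hdropne : (l.drop (i+1)).filter p ≠ [] := List.ne_nil_of_mem hjmem
  -- x is the last of filter l = filter take ++ filter drop, so x ∈ drop (i+1)
  have hsplit : l.filter p = (l.take (i+1)).filter p ++ (l.drop (i+1)).filter p := by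
    rw [← List.filter_append, List.take_append_drop]
  have hxdrop : x ∈ l.drop (i+1) := by
    have hx? : (l.filter p).getLast? = some x := List.getLast?_eq_getLast hne
    rw [hsplit, List.getLast?_append_of_ne_nil _ hdropne] at hx?
    rw [List.getLast?_eq_getLast hdropne] at hx?
    injection hx? with h'
    rw [← h']
    exact List.mem_of_mem_filter (List.getLast_mem hdropne)
  have hxtake : x ∈ l.take (i+1) := by
    rw [← hgeti]
    rw [List.take_succ, List.getElem?_eq_getElem hi]
    exact List.mem_append.mpr (Or.inr (by simp))
  have hdisj : List.Disjoint (l.take (i+1)) (l.drop (i+1)) := by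
    have hnd2 := hnd
    rw [← List.take_append_drop (i+1) l, List.nodup_append] at hnd2
    exact fun a ha hb => hnd2.2.2 a ha a hb rfl
  exact hdisj hxtake hxdrop

lemma tour_outdata (src tgt : E → V) (e₀ : E) (l : List E)
    (hl : IsEulerianTourFrom src tgt e₀ l) :
    OutData src (fun u => l.filter (fun f => decide (src f = u))) := by
  intro u
  refine ⟨hl.1.filter _, fun e => ?_⟩
  rw [List.mem_filter]
  simp [hl.2.1 e]

lemma tour_head (src tgt : E → V) (e₀ : E) (l : List E)
    (hl : IsEulerianTourFrom src tgt e₀ l) :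
    (l.filter (fun f => decide (src f = src e₀))).head? = some e₀ := by
  have hh := hl.2.2.1
  cases l with
  | nil => simp at hh
  | cons a t =>
    simp only [List.head?_cons, Option.some_inj] at hh
    subst hh
    rw [List.filter_cons]
    simp

lemma tour_arb (src tgt : E → V) (e₀ : E) (hout : ∀ u : V, ∃ e, src e = u) (l : List E)
    (hl : IsEulerianTourFrom src tgt e₀ l) :
    IsArborescence src tgt (src e₀)
      (fun u _ => ((l.filter (fun f => decide (src f = u))).getLast?).getD e₀) := by
  have hlne : l ≠ [] := by
    intro h
    rw [h] at hl
    simpa using hl.2.2.1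
  have hfne : ∀ u : V, l.filter (fun f => decide (src f = u)) ≠ [] := by
    intro u
    obtain ⟨e, he⟩ := hout u
    apply List.ne_nil_of_mem (a := e)
    rw [List.mem_filter]
    exact ⟨hl.2.1 e, by simp [he]⟩
  set T : V → E := fun u => ((l.filter (fun f => decide (src f = u))).getLast?).getD e₀ with hT
  have hTval : ∀ u, T u = (l.filter (fun f => decide (src f = u))).getLast (hfne u) := by
    intro u
    rw [hT]
    simp only
    rw [List.getLast?_eq_getLast (hfne u), Option.getD_some]
  have hsrcT : ∀ u, src (T u) = u := by
    intro u
    have : T u ∈ l.filter (fun f => decide (src f = u)) := by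
      rw [hTval u]
      exact List.getLast_mem _
    rw [List.mem_filter] at this
    simpa using this.2
  have hTmem : ∀ u, T u ∈ l := by
    intro u
    have : T u ∈ l.filter (fun f => decide (src f = u)) := by
      rw [hTval u]
      exact List.getLast_mem _
    exact List.mem_of_mem_filter this
  have hidx : ∀ u, l.idxOf (T u) < l.length := fun u => List.idxOf_lt_length_iff.mpr (hTmem u)
  have hstep : ∀ u, u ≠ src e₀ →
      tgt (T u) = src e₀ ∨ l.idxOf (T u) < l.idxOf (T (tgt (T u))) := by
    intro u hu
    set i := l.idxOf (T u) with hi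
    have hilt : i < l.length := hidx u
    have hgeti : l[i]'hilt = T u := List.getElem_idxOf hilt
    by_cases hilast : i + 1 = l.length
    · left
      have h1 : l.getLast hlne = l[l.length - 1]'(by omega) := List.getLast_eq_getElem hlne
      have h2 : l[l.length - 1]'(by omega) = l[i]'hilt := by
        congr 1
        omega
      have := hl.2.2.2.2 hlne
      rw [h1, h2, hgeti] at this
      exact this
    · have hi1 : i + 1 < l.length := by omega
      have hchain := hl.2.2.2.1 i hi1
      simp only [List.get_eq_getElem] at hchain
      have hsrcnext : src (l[i+1]'hi1) = tgt (T u) := by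
        rw [← hchain, hgeti]
      right
      have hmax := maxIndex l hl.1 (fun f => decide (src f = tgt (T u)))
        (hfne (tgt (T u))) (i+1) hi1 (by simp [hsrcnext])
      rw [← hTval (tgt (T u))] at hmax
      omega
  refine ⟨fun u _ => hsrcT u, ?_⟩
  have main : ∀ k u, l.length ≤ l.idxOf (T u) + k →
      ∃ n, (fun w => if h : w = src e₀ then src e₀ else tgt (T w))^[n] u = src e₀ := by
    intro k
    induction k with
    | zero =>
      intro u hk
      exact absurd hk (by have := hidx u; omega)
    | succ k ih =>
      intro u hk
      by_cases hu : u = src e₀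
      · exact ⟨0, hu⟩
      · rcases hstep u hu with h | h
        · refine ⟨1, ?_⟩
          simp only [Function.iterate_one]
          rw [dif_neg hu]
          exact h
        · obtain ⟨n, hn⟩ := ih (tgt (T u)) (by omega)
          refine ⟨n + 1, ?_⟩
          rw [Function.iterate_succ_apply]
          rw [dif_neg hu]
          exact hn
  intro u
  exact main l.length u (by omega)

lemma walk_sim (src tgt : E → V) (e₀ : E) (l : List E)
    (hl : IsEulerianTourFrom src tgt e₀ l) (n : ℕ) :
    walkW src tgt (fun u => l.filter (fun f => decide (src f = u))) e₀ n = l.take (n+1) := by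
  have hlne : l ≠ [] := by
    intro h
    rw [h] at hl
    simpa using hl.2.2.1
  obtain ⟨t0, ht0⟩ : ∃ t0, l = e₀ :: t0 := by
    cases l with
    | nil => exact absurd rfl hlne
    | cons a t =>
      have := hl.2.2.1
      simp only [List.head?_cons, Option.some_inj] at this
      exact ⟨t, by rw [this]⟩
  induction n with
  | zero =>
    rw [ht0]
    rfl
  | succ n ih =>
    rw [walkW_succ, ih]
    by_cases h : n + 1 < l.length
    · have hn : n < l.length := by omega
      have htlen : (l.take (n+1)).length = n + 1 := by
        rw [List.length_take]
        omega
      have htne : l.take (n+1) ≠ [] := by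
        apply List.ne_nil_of_length_pos
        omega
      have hgetlast : (l.take (n+1)).getLast? = some (l[n]'hn) := by
        rw [List.getLast?_eq_getLast htne, Option.some_inj,
          List.getLast_eq_getElem htne]
        have : (l.take (n+1)).length - 1 = n := by omega
        simp_rw [this]
        exact List.getElem_take
      have hchainn : tgt (l[n]'hn) = src (l[n+1]'h) := by
        have := hl.2.2.2.1 n h
        simpa [List.get_eq_getElem] using this
      set p : E → Bool := fun f => decide (src f = tgt (l[n]'hn)) with hp
      have hsplit : (l.take (n+2)).filter p = (l.take (n+1)).filter p ++ [l[n+1]'h] := by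
        have : l.take (n+2) = l.take (n+1) ++ [l[n+1]'h] := by
          rw [List.take_succ, List.getElem?_eq_getElem h]
          rfl
        rw [this, List.filter_append]
        congr 1
        rw [List.filter_cons]
        simp [hp, ← hchainn]
      have hpref2 : (l.take (n+2)).filter p <+: l.filter p := (List.take_prefix _ _).filter p
      rw [hsplit] at hpref2
      obtain ⟨r, hr⟩ := hpref2
      have hget : (l.filter p)[cntO src (l.take (n+1)) (tgt (l[n]'hn))]? = some (l[n+1]'h) := by
        have hcnt : cntO src (l.take (n+1)) (tgt (l[n]'hn)) = ((l.take (n+1)).filter p).length :=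
          rfl
        rw [hcnt, ← hr]
        rw [List.getElem?_append_left (by simp)]
        exact List.getElem?_concat_length
      rw [stepW_of_some src tgt _ _ _ _ hgetlast hget]
      rw [List.take_succ (i := n+1), List.getElem?_eq_getElem h]
      rfl
    · have hlen : l.length ≤ n + 1 := by omega
      rw [List.take_of_length_le hlen, List.take_of_length_le (by omega)]
      have hgetlast : l.getLast? = some (l.getLast hlne) := List.getLast?_eq_getLast hlne
      have hclose : tgt (l.getLast hlne) = src e₀ := hl.2.2.2.2 hlne
      apply stepW_of_none src tgt _ _ _ hgetlast
      rw [hclose]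
      apply List.getElem?_eq_none
      exact le_refl _


def Good (src tgt : E → V) (e₀ : E) (D : V → List E) : Prop :=
  OutData src D ∧ (D (src e₀)).head? = some e₀ ∧
  IsArborescence src tgt (src e₀) (fun u _ => ((D u).getLast?).getD e₀)

lemma out_nonempty (src tgt : E → V) (e₀ : E)
    (hbal : ∀ v : V, (Finset.univ.filter fun e => tgt e = v).card =
      (Finset.univ.filter fun e => src e = v).card)
    (hconn : ∀ u w : V, Relation.ReflTransGen
      (fun x y => ∃ e : E, (src e = x ∧ tgt e = y) ∨ (src e = y ∧ tgt e = x)) u w) :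
    ∀ u : V, ∃ e, src e = u := by
  intro u
  by_cases h : u = src e₀
  · exact ⟨e₀, h.symm⟩
  · have hc := hconn u (src e₀)
    rcases Relation.ReflTransGen.cases_head hc with h1 | ⟨c, ⟨e, he⟩, -⟩
    · exact absurd h1 h
    · rcases he with ⟨h1, h2⟩ | ⟨h1, h2⟩
      · exact ⟨e, h1⟩
      · have h3 : 0 < (Finset.univ.filter fun f => tgt f = u).card := by
          apply Finset.card_pos.mpr
          exact ⟨e, by simp [h2]⟩
        rw [hbal u] at h3
        obtain ⟨f, hf⟩ := Finset.card_pos.mp h3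
        simp only [Finset.mem_filter, Finset.mem_univ, true_and] at hf
        exact ⟨f, hf⟩

lemma tour_length (src tgt : E → V) (e₀ : E) (l : List E)
    (hl : IsEulerianTourFrom src tgt e₀ l) : l.length = Fintype.card E := by
  rw [← List.toFinset_card_of_nodup hl.1]
  have : l.toFinset = Finset.univ := Finset.eq_univ_iff_forall.mpr (fun e => by
    rw [List.mem_toFinset]; exact hl.2.1 e)
  rw [this, Finset.card_univ]

noncomputable def mainEquiv (src tgt : E → V) (e₀ : E)
    (hbal : ∀ v : V, (Finset.univ.filter fun e => tgt e = v).card =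
      (Finset.univ.filter fun e => src e = v).card)
    (hout : ∀ u : V, ∃ e, src e = u) :
    {l : List E // IsEulerianTourFrom src tgt e₀ l} ≃ {D : V → List E // Good src tgt e₀ D} where
  toFun l := ⟨fun u => l.1.filter (fun f => decide (src f = u)),
    tour_outdata src tgt e₀ l.1 l.2, tour_head src tgt e₀ l.1 l.2,
    tour_arb src tgt e₀ hout l.1 l.2⟩
  invFun D := ⟨walkW src tgt D.1 e₀ (Fintype.card E),
    final_tour src tgt D.1 e₀ hbal D.2.1 D.2.2.1 D.2.2.2.2 D.2.2.2.1⟩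
  left_inv l := by
    apply Subtype.ext
    have h1 := walk_sim src tgt e₀ l.1 l.2 (Fintype.card E)
    simp only at h1 ⊢
    rw [h1, List.take_of_length_le]
    rw [tour_length src tgt e₀ l.1 l.2]
    omega
  right_inv D := by
    apply Subtype.ext
    funext u
    exact filters_final src tgt D.1 e₀ hbal D.2.1 D.2.2.1 D.2.2.2.2 D.2.2.2.1 u

lemma finite_good (src tgt : E → V) (e₀ : E) : Finite {D : V → List E // Good src tgt e₀ D} := by
  have hinj : Function.Injective
      (fun D : {D : V → List E // Good src tgt e₀ D} =>
        (fun u => (⟨D.1 u, (D.2.1 u).1⟩ : {l : List E // l.Nodup}))) := by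
    intro a b hab
    apply Subtype.ext
    funext u
    have := congrFun hab u
    exact congrArg Subtype.val this
  exact Finite.of_injective _ hinj

lemma card_good (src tgt : E → V) (e₀ : E) :
    Nat.card {D : V → List E // Good src tgt e₀ D} =
      Nat.card {t : ∀ u : V, u ≠ src e₀ → E // IsArborescence src tgt (src e₀) t} *
        ∏ u : V, ((Finset.univ.filter fun e => src e = u).card - 1).factorial := by
  classical
  haveI hGfin := finite_good src tgt e₀
  set v := src e₀ with hv
  set Arb := {t : ∀ u : V, u ≠ v → E // IsArborescence src tgt v t} with hArb
  letI : Fintype Arb := Fintype.ofFinite _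
  set proj : {D : V → List E // Good src tgt e₀ D} → Arb :=
    fun D => ⟨fun u _ => ((D.1 u).getLast?).getD e₀, D.2.2.2⟩ with hproj
  have h1 : Nat.card {D : V → List E // Good src tgt e₀ D}
      = Nat.card (Σ t : Arb, {D : {D : V → List E // Good src tgt e₀ D} // proj D = t}) :=
    (Nat.card_congr (Equiv.sigmaFiberEquiv proj)).symm
  rw [h1, nat_card_sigma]
  have h2 : ∀ t : Arb, Nat.card {D : {D : V → List E // Good src tgt e₀ D} // proj D = t}
      = ∏ u : V, ((Finset.univ.filter fun e => src e = u).card - 1).factorial := by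
    intro t
    have e2 : {D : {D : V → List E // Good src tgt e₀ D} // proj D = t} ≃
        ∀ u : V, {m : List E // (m.Nodup ∧ ∀ e, e ∈ m ↔ src e = u) ∧
          (if h : u = v then m.head? = some e₀ else m.getLast? = some (t.1 u h))} := by
      refine ⟨fun Dp u => ⟨Dp.1.1 u, ⟨(Dp.1.2.1 u), ?_⟩⟩, fun L => ⟨⟨fun u => (L u).1, ?_, ?_, ?_⟩, ?_⟩, ?_, ?_⟩
      · by_cases h : u = v
        · rw [dif_pos h]
          subst h
          exact Dp.1.2.2.1
        · rw [dif_neg h]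
          have hsrc : src (((Dp.1.1 u).getLast?).getD e₀) = u := Dp.1.2.2.2.1 u h
          have hDne : Dp.1.1 u ≠ [] := by
            intro hnil
            rw [hnil] at hsrc
            simp only [List.getLast?_nil, Option.getD_none] at hsrc
            exact h hsrc.symm
          have hval : t.1 u h = ((Dp.1.1 u).getLast?).getD e₀ := by
            have hv1 := congrArg Subtype.val Dp.2
            have hv2 := congrFun hv1 u
            have hv3 := congrFun hv2 h
            exact hv3.symm
          rw [List.getLast?_eq_getLast hDne, Option.some_inj]
          rw [hval, List.getLast?_eq_getLast hDne, Option.getD_some]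
      · exact fun u => (L u).2.1
      · have := (L v).2.2
        rw [dif_pos rfl] at this
        exact this
      · have hfun : (fun (u : V) (h : u ≠ v) => (((L u).1).getLast?).getD e₀) = t.1 := by
          funext u h
          have := (L u).2.2
          rw [dif_neg h] at this
          rw [this]
          rfl
        have harb := t.2
        rw [← hfun] at harb
        exact harb
      · apply Subtype.ext
        funext u h
        have := (L u).2.2
        rw [dif_neg h] at this
        simp only [hproj, this, Option.getD_some]
      · intro Dp
        apply Subtype.ext
        apply Subtype.ext
        rfl
      · intro L
        funext u
        apply Subtype.ext
        rfl
    rw [Nat.card_congr e2]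
    haveI : ∀ u : V, Finite {m : List E // (m.Nodup ∧ ∀ e, e ∈ m ↔ src e = u) ∧
        (if h : u = v then m.head? = some e₀ else m.getLast? = some (t.1 u h))} :=
      fun u => finite_listSub _ (fun l h => h.1.1)
    rw [Nat.card_pi]
    apply Finset.prod_congr rfl
    intro u _
    by_cases h : u = v
    · have e3 : {m : List E // (m.Nodup ∧ ∀ e, e ∈ m ↔ src e = u) ∧
          (if h : u = v then m.head? = some e₀ else m.getLast? = some (t.1 u h))} ≃
          {m : List E // m.Nodup ∧ (∀ e, e ∈ m ↔ e ∈ (Finset.univ.filter fun f => src f = u)) ∧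
            m.head? = some e₀} := by
        apply Equiv.subtypeEquivRight
        intro m
        rw [dif_pos h]
        constructor
        · rintro ⟨⟨h1, h2⟩, h3⟩
          exact ⟨h1, fun e => by rw [h2 e]; simp, h3⟩
        · rintro ⟨h1, h2, h3⟩
          exact ⟨⟨h1, fun e => by rw [h2 e]; simp⟩, h3⟩
      rw [Nat.card_congr e3]
      apply card_listings_head
      simp only [Finset.mem_filter, Finset.mem_univ, true_and]
      rw [h]
    · have e3 : {m : List E // (m.Nodup ∧ ∀ e, e ∈ m ↔ src e = u) ∧
          (if h' : u = v then m.head? = some e₀ else m.getLast? = some (t.1 u h'))} ≃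
          {m : List E // m.Nodup ∧ (∀ e, e ∈ m ↔ e ∈ (Finset.univ.filter fun f => src f = u)) ∧
            m.getLast? = some (t.1 u h)} := by
        apply Equiv.subtypeEquivRight
        intro m
        rw [dif_neg h]
        constructor
        · rintro ⟨⟨h1, h2⟩, h3⟩
          exact ⟨h1, fun e => by rw [h2 e]; simp, h3⟩
        · rintro ⟨h1, h2, h3⟩
          exact ⟨⟨h1, fun e => by rw [h2 e]; simp⟩, h3⟩
      rw [Nat.card_congr e3]
      apply card_listings_last
      simp only [Finset.mem_filter, Finset.mem_univ, true_and]
      exact t.2.1 u h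
  simp only [h2, Finset.sum_const, Finset.card_univ, smul_eq_mul]
  rw [Nat.card_eq_fintype_card]

end BESTAux

/-- The BEST theorem: in a connected balanced directed multigraph, the number
of Eulerian tours starting with a fixed edge `e₀` equals the number of
oriented spanning trees rooted at `src e₀` times `∏_u (outdeg u − 1)!`. -/
theorem best_theorem (src tgt : E → V)
    (hbal : ∀ v : V, (Finset.univ.filter fun e => tgt e = v).card =
      (Finset.univ.filter fun e => src e = v).card)
    (hconn : ∀ u w : V, Relation.ReflTransGen
      (fun x y => ∃ e : E, (src e = x ∧ tgt e = y) ∨ (src e = y ∧ tgt e = x)) u w)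
    (e₀ : E) :
    Nat.card {l : List E // IsEulerianTourFrom src tgt e₀ l} =
      Nat.card {t : ∀ u : V, u ≠ src e₀ → E //
          IsArborescence src tgt (src e₀) t} *
        ∏ u : V, ((Finset.univ.filter fun e => src e = u).card - 1).factorial := by
  have hout := BESTAux.out_nonempty src tgt e₀ hbal hconn
  have h1 : Nat.card {l : List E // IsEulerianTourFrom src tgt e₀ l}
      = Nat.card {D : V → List E // BESTAux.Good src tgt e₀ D} :=
    Nat.card_congr (BESTAux.mainEquiv src tgt e₀ hbal hout)
  rw [h1, BESTAux.card_good]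

end BEST
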